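/- Let a, d₁, d₂ be positive integers and let Π be the orthogonal projection of (ℂ^a)^{⊗(d₁+d₂)} onto the symmetric subspace S^{d₁+d₂}(ℂ^a). Then for every ψ ∈ S^{d₁}(ℂ^a) and φ ∈ S^{d₂}(ℂ^a), one has ‖Π(ψ ⊗ φ)‖ ≥ C(d₁+d₂, d₁)^{−1/2} · ‖ψ‖ · ‖φ‖, where C(d₁+d₂, d₁) is the binomial coefficient. -/

import Mathlib

/-
Common definitions.

We model the tensor product `ℂ^{n₁} ⊗ ⋯ ⊗ ℂ^{n_m}` concretely as
`EuclideanSpace ℂ (∀ i, Fin (n i))` (coordinates with respect to the standard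
product basis), and the `d`-fold tensor power `(ℂ^a)^{⊗ d}` as
`EuclideanSpace ℂ (ι → Fin a)` for an index type `ι` of cardinality `d`.
-/

noncomputable section

open Finset

/-- The product (elementary tensor) vector `φ₁ ⊗ ⋯ ⊗ φ_m` in a multipartite space,
in coordinates. -/
def prodVec {m : ℕ} {n : Fin m → ℕ} (φ : ∀ i, EuclideanSpace ℂ (Fin (n i))) :
    EuclideanSpace ℂ (∀ i, Fin (n i)) :=
  WithLp.toLp 2 (fun v => ∏ i, φ i (v i))

/-- The product vector `φ₁ ⊗ ⋯ ⊗ φ_m` in `(ℂ^n)^{⊗ m}`, in coordinates. -/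
def prodVecC {m n : ℕ} (φ : Fin m → EuclideanSpace ℂ (Fin n)) :
    EuclideanSpace ℂ (Fin m → Fin n) :=
  WithLp.toLp 2 (fun v => ∏ i, φ i (v i))

/-- The product vector `φ₁ ⊗ φ₂` in a bipartite space, in coordinates. -/
def prodVec2 {ι₁ ι₂ : Type*} (φ₁ : EuclideanSpace ℂ ι₁) (φ₂ : EuclideanSpace ℂ ι₂) :
    EuclideanSpace ℂ (ι₁ × ι₂) :=
  WithLp.toLp 2 (fun p => φ₁ p.1 * φ₂ p.2)

/-- Geometric measure of entanglement of a subspace of a multipartite space: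
`E(U) = inf { 1 - ⟨φ₁⊗⋯⊗φ_m, Π_U (φ₁⊗⋯⊗φ_m)⟩ : ‖φ_i‖ = 1 }`, where we use that
`⟨x, Π_U x⟩ = ‖Π_U x‖²`. -/
def gme {m : ℕ} {n : Fin m → ℕ} (U : Submodule ℂ (EuclideanSpace ℂ (∀ i, Fin (n i)))) : ℝ :=
  sInf {x | ∃ φ : ∀ i, EuclideanSpace ℂ (Fin (n i)),
    (∀ i, ‖φ i‖ = 1) ∧ x = 1 - ‖Submodule.orthogonalProjection U (prodVec φ)‖ ^ 2}

/-- Geometric measure of entanglement of a subspace of `(ℂ^n)^{⊗ m}`. -/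
def gmeC {m n : ℕ} (U : Submodule ℂ (EuclideanSpace ℂ (Fin m → Fin n))) : ℝ :=
  sInf {x | ∃ φ : Fin m → EuclideanSpace ℂ (Fin n),
    (∀ i, ‖φ i‖ = 1) ∧ x = 1 - ‖Submodule.orthogonalProjection U (prodVecC φ)‖ ^ 2}

/-- Geometric measure of entanglement of a subspace of a bipartite space. -/
def gme2 {ι₁ ι₂ : Type*} [Fintype ι₁] [Fintype ι₂]
    (U : Submodule ℂ (EuclideanSpace ℂ (ι₁ × ι₂))) : ℝ :=
  sInf {x | ∃ (φ₁ : EuclideanSpace ℂ ι₁) (φ₂ : EuclideanSpace ℂ ι₂),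
    ‖φ₁‖ = 1 ∧ ‖φ₂‖ = 1 ∧ x = 1 - ‖Submodule.orthogonalProjection U (prodVec2 φ₁ φ₂)‖ ^ 2}

/-- The symmetric subspace `S^{|ι|}(ℂ^a)` of `(ℂ^a)^{⊗ ι}`: tensors invariant under all
permutations of the tensor factors. -/
def symmSub (a : ℕ) (ι : Type*) : Submodule ℂ (EuclideanSpace ℂ (ι → Fin a)) where
  carrier := {ψ | ∀ σ : Equiv.Perm ι, ∀ v : ι → Fin a, ψ (v ∘ σ) = ψ v}
  zero_mem' := fun _ _ => rfl
  add_mem' := by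
    intro x y hx hy σ v
    show x (v ∘ σ) + y (v ∘ σ) = x v + y v
    rw [hx σ v, hy σ v]
  smul_mem' := by
    intro c x hx σ v
    show c * x (v ∘ σ) = c * x v
    rw [hx σ v]

/-- Splitting an index `v : Fin d ⊕ Fin d → Fin a` into a pair of indices, realizing
`(ℂ^a)^{⊗ 2d} ≅ (ℂ^a)^{⊗ d} ⊗ (ℂ^a)^{⊗ d}`. -/
def pairSplit {a d : ℕ} (v : (Fin d ⊕ Fin d) → Fin a) : (Fin d → Fin a) × (Fin d → Fin a) :=
  (v ∘ Sum.inl, v ∘ Sum.inr)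

/-- The symmetric subspace `S^{2d}(ℂ^a)`, viewed inside
`(ℂ^a)^{⊗ d} ⊗ (ℂ^a)^{⊗ d} = EuclideanSpace ℂ ((Fin d → Fin a) × (Fin d → Fin a))`. -/
def symmSub2 (a d : ℕ) :
    Submodule ℂ (EuclideanSpace ℂ ((Fin d → Fin a) × (Fin d → Fin a))) where
  carrier := {ψ | ∀ σ : Equiv.Perm (Fin d ⊕ Fin d), ∀ v : (Fin d ⊕ Fin d) → Fin a,
    ψ (pairSplit (v ∘ σ)) = ψ (pairSplit v)}
  zero_mem' := fun _ _ => rfl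
  add_mem' := by
    intro x y hx hy σ v
    show x (pairSplit (v ∘ σ)) + y (pairSplit (v ∘ σ)) = x (pairSplit v) + y (pairSplit v)
    rw [hx σ v, hy σ v]
  smul_mem' := by
    intro c x hx σ v
    show c * x (pairSplit (v ∘ σ)) = c * x (pairSplit v)
    rw [hx σ v]

/-- The tensor product `W₁ ⊗ W₂` of subspaces, as the span of the elementary tensors,
inside the concrete bipartite space. -/
def tensorPairs {ι₁ ι₂ : Type*} [Fintype ι₁] [Fintype ι₂]
    (W₁ : Submodule ℂ (EuclideanSpace ℂ ι₁)) (W₂ : Submodule ℂ (EuclideanSpace ℂ ι₂)) :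
    Submodule ℂ (EuclideanSpace ℂ (ι₁ × ι₂)) :=
  Submodule.span ℂ {χ | ∃ ψ ∈ W₁, ∃ φ ∈ W₂, χ = prodVec2 ψ φ}

/-- The tensor product `U ⊗ V` of two bipartite subspaces
`U, V ⊆ ℂ^{ι₁} ⊗ ℂ^{ι₂}`, viewed as a bipartite subspace of
`(ℂ^{ι₁} ⊗ ℂ^{ι₁}) ⊗ (ℂ^{ι₂} ⊗ ℂ^{ι₂})` via the regrouping isomorphism that swaps
the middle two tensor factors. -/
def tensorSub {ι₁ ι₂ : Type*} [Fintype ι₁] [Fintype ι₂]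
    (U V : Submodule ℂ (EuclideanSpace ℂ (ι₁ × ι₂))) :
    Submodule ℂ (EuclideanSpace ℂ ((ι₁ × ι₁) × (ι₂ × ι₂))) :=
  Submodule.span ℂ {χ | ∃ ψ ∈ U, ∃ φ ∈ V,
    χ = WithLp.toLp 2 (fun p => ψ (p.1.1, p.2.1) * φ (p.1.2, p.2.2))}

/-- Entrywise complex conjugate of a vector, with respect to the standard basis. -/
def conjVec {ι : Type*} (ψ : EuclideanSpace ℂ ι) : EuclideanSpace ℂ ι :=
  WithLp.toLp 2 (fun v => starRingEnd ℂ (ψ v))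

/-- The subspace `Ū` of entrywise complex conjugates of vectors of `U`. -/
def conjSubmodule {ι : Type*} (U : Submodule ℂ (EuclideanSpace ℂ ι)) :
    Submodule ℂ (EuclideanSpace ℂ ι) where
  carrier := conjVec '' U
  zero_mem' := ⟨0, U.zero_mem, by
    ext v; show starRingEnd ℂ 0 = 0; exact map_zero _⟩
  add_mem' := by
    rintro a b ⟨x, hx, rfl⟩ ⟨y, hy, rfl⟩
    exact ⟨x + y, U.add_mem hx hy, by
      ext v; exact map_add (starRingEnd ℂ) (x v) (y v)⟩
  smul_mem' := by
    rintro c a ⟨x, hx, rfl⟩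
    refine ⟨starRingEnd ℂ c • x, U.smul_mem _ hx, ?_⟩
    ext v
    show starRingEnd ℂ (starRingEnd ℂ c * x v) = c * starRingEnd ℂ (x v)
    simp

/-- The content (type) of a word `w : Fin d → Fin a`: the vector `α ∈ ℤ_{≥0}^a`
recording how many times each letter occurs. -/
def wordContent {a d : ℕ} (w : Fin d → Fin a) : Fin a → ℕ :=
  fun i => (Finset.univ.filter fun j => w j = i).card

/-- The monomial orthonormal basis vector `|α⟩ = C(d,α)^{1/2} Π_{S^d(ℂ^a)} (e₁^{⊗α₁} ⊗ ⋯ ⊗ e_a^{⊗α_a})`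
of the symmetric subspace `S^d(ℂ^a)`, where `α = wordContent w` and
`e₁^{⊗α₁} ⊗ ⋯ ⊗ e_a^{⊗α_a}` is the standard basis vector of `(ℂ^a)^{⊗ d}` indexed by any word `w`
of content `α` (the projection does not depend on the choice of such a word). -/
def monVec (a d : ℕ) (w : Fin d → Fin a) : EuclideanSpace ℂ (Fin d → Fin a) :=
  (Real.sqrt (Nat.multinomial Finset.univ (wordContent w)) : ℂ) •
    (Submodule.orthogonalProjection (symmSub a (Fin d)) (EuclideanSpace.single w 1) :
      EuclideanSpace ℂ (Fin d → Fin a))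

/-- The squared Schmidt coefficients of a bipartite vector `ψ`, i.e. the eigenvalues of
`M Mᴴ` where `M` is the coefficient matrix of `ψ`. -/
def schmidtSqCoeffs {ι₁ ι₂ : Type*} [Fintype ι₁] [Fintype ι₂] [DecidableEq ι₁]
    (ψ : EuclideanSpace ℂ (ι₁ × ι₂)) : ι₁ → ℝ :=
  (Matrix.isHermitian_mul_conjTranspose_self (Matrix.of fun i j => ψ (i, j))).eigenvalues

/-- The Rényi `p`-entropy of (the squared Schmidt coefficients of) a bipartite vector. -/
def renyiEnt (p : ℝ) {ι₁ ι₂ : Type*} [Fintype ι₁] [Fintype ι₂] [DecidableEq ι₁]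
    (ψ : EuclideanSpace ℂ (ι₁ × ι₂)) : ℝ :=
  (1 / (1 - p)) * Real.logb 2 (∑ i, schmidtSqCoeffs ψ i ^ p)

/-- The minimum output Rényi `p`-entropy of a bipartite subspace. -/
def hminEnt (p : ℝ) {ι₁ ι₂ : Type*} [Fintype ι₁] [Fintype ι₂] [DecidableEq ι₁]
    (U : Submodule ℂ (EuclideanSpace ℂ (ι₁ × ι₂))) : ℝ :=
  sInf {x | ∃ ψ ∈ U, ‖ψ‖ = 1 ∧ x = renyiEnt p ψ}

end

noncomputable section BBEMhelpers

open Sum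

variable {α β γ δ : Type*}

/-- Split a function space along a decidable predicate. -/
def bbemSplitEquiv (P : α → Prop) [DecidablePred P] (γ : Type*) :
    (α → γ) ≃ ({x // P x} → γ) × ({x // ¬ P x} → γ) where
  toFun v := (fun i => v i.1, fun i => v i.1)
  invFun pq i := if h : P i then pq.1 ⟨i, h⟩ else pq.2 ⟨i, h⟩
  left_inv v := by funext i; by_cases h : P i <;> simp [h]
  right_inv pq := by
    refine Prod.ext ?_ ?_ <;> funext i
    · simp [i.2]
    · simp [i.2]

lemma bbem_sum_split {M : Type*} [Fintype α] [DecidableEq α] [Fintype γ] [AddCommMonoid M]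
    (P : α → Prop) [DecidablePred P] (f : (α → γ) → M) :
    ∑ v : α → γ, f v = ∑ p : {x // P x} → γ, ∑ q : {x // ¬ P x} → γ,
      f (fun i => if h : P i then p ⟨i, h⟩ else q ⟨i, h⟩) := by
  exact ((Equiv.sum_comp (bbemSplitEquiv P γ).symm f).symm).trans
    (Fintype.sum_prod_type (fun pq => f ((bbemSplitEquiv P γ).symm pq)))

lemma bbem_sum_sumArrow {M : Type*} [Fintype α] [Fintype β] [DecidableEq α] [DecidableEq β] [Fintype γ] [AddCommMonoid M]
    (f : (α ⊕ β → γ) → M) :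
    ∑ v : α ⊕ β → γ, f v = ∑ vL : α → γ, ∑ vR : β → γ, f (Sum.elim vL vR) := by
  exact ((Equiv.sum_comp (Equiv.sumArrowEquivProdArrow α β γ).symm f).symm).trans
    (Fintype.sum_prod_type (fun pq => f ((Equiv.sumArrowEquivProdArrow α β γ).symm pq)))

lemma bbem_sum_precomp {M : Type*} [Fintype α] [Fintype β] [DecidableEq α] [DecidableEq β] [Fintype γ] [AddCommMonoid M]
    (e : α ≃ β) (f : (α → γ) → M) :
    ∑ v : α → γ, f v = ∑ u : β → γ, f (u ∘ e) := by
  exact (Equiv.sum_comp (Equiv.arrowCongr e.symm (Equiv.refl γ)) f).symm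

/-- LL part of a permutation of a sum type. -/
def bbemEqLL (e : α ⊕ β ≃ γ ⊕ δ) :
    {j : α // (e (.inl j)).isLeft} ≃ {i : γ // (e.symm (.inl i)).isLeft} where
  toFun x := ⟨(e (.inl x.1)).getLeft x.2, by rw [Sum.inl_getLeft]; simp⟩
  invFun y := ⟨(e.symm (.inl y.1)).getLeft y.2, by rw [Sum.inl_getLeft]; simp⟩
  left_inv x := by
    apply Subtype.ext
    apply Sum.inl_injective (β := β)
    rw [Sum.inl_getLeft, Sum.inl_getLeft]
    simp
  right_inv y := by
    apply Subtype.ext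
    apply Sum.inl_injective (β := δ)
    rw [Sum.inl_getLeft, Sum.inl_getLeft]
    simp

/-- LR part: those `j : α` sent to the right component correspond to elements of `δ`
whose preimage is in the left component. -/
def bbemEqLR (e : α ⊕ β ≃ γ ⊕ δ) :
    {j : α // ¬ (e (.inl j)).isLeft} ≃ {k : δ // (e.symm (.inr k)).isLeft} where
  toFun x := ⟨(e (.inl x.1)).getRight (Sum.not_isLeft.mp x.2), by rw [Sum.inr_getRight]; simp⟩
  invFun y := ⟨(e.symm (.inr y.1)).getLeft y.2, by rw [Sum.inl_getLeft]; simp⟩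
  left_inv x := by
    apply Subtype.ext
    apply Sum.inl_injective (β := β)
    rw [Sum.inl_getLeft, Sum.inr_getRight]
    simp
  right_inv y := by
    apply Subtype.ext
    apply Sum.inr_injective (α := γ)
    rw [Sum.inr_getRight, Sum.inl_getLeft]
    simp

/-- RR part. -/
def bbemEqRR (e : α ⊕ β ≃ γ ⊕ δ) :
    {k : β // ¬ (e (.inr k)).isLeft} ≃ {l : δ // ¬ (e.symm (.inr l)).isLeft} where
  toFun x := ⟨(e (.inr x.1)).getRight (Sum.not_isLeft.mp x.2), by
    rw [Sum.inr_getRight]; simp [Sum.not_isLeft]⟩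
  invFun y := ⟨(e.symm (.inr y.1)).getRight (Sum.not_isLeft.mp y.2), by
    rw [Sum.inr_getRight]; simp [Sum.not_isLeft]⟩
  left_inv x := by
    apply Subtype.ext
    apply Sum.inr_injective (α := α)
    rw [Sum.inr_getRight, Sum.inr_getRight]
    simp
  right_inv y := by
    apply Subtype.ext
    apply Sum.inr_injective (α := γ)
    rw [Sum.inr_getRight, Sum.inr_getRight]
    simp

/-- RL part. -/
def bbemEqRL (e : α ⊕ β ≃ γ ⊕ δ) :
    {k : β // (e (.inr k)).isLeft} ≃ {i : γ // ¬ (e.symm (.inl i)).isLeft} where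
  toFun x := ⟨(e (.inr x.1)).getLeft x.2, by rw [Sum.inl_getLeft]; simp [Sum.not_isLeft]⟩
  invFun y := ⟨(e.symm (.inl y.1)).getRight (Sum.not_isLeft.mp y.2), by rw [Sum.inr_getRight]; simp⟩
  left_inv x := by
    apply Subtype.ext
    apply Sum.inr_injective (α := α)
    rw [Sum.inr_getRight, Sum.inl_getLeft]
    simp
  right_inv y := by
    apply Subtype.ext
    apply Sum.inl_injective (β := β)
    simp [Sum.inl_getLeft, Sum.inr_getRight]

end BBEMhelpers

open Sum

-- helper apply lemmas for Equiv.subtypeCongr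
lemma bbem_subtypeCongr_pos {α : Type*} {p q : α → Prop} [DecidablePred p] [DecidablePred q]
    (e : { x // p x } ≃ { x // q x }) (f : { x // ¬p x } ≃ { x // ¬q x }) (a : α) (h : p a) :
    Equiv.subtypeCongr e f a = (e ⟨a, h⟩ : α) := by
  simp [Equiv.subtypeCongr, Equiv.sumCompl_symm_apply_of_pos h]

lemma bbem_subtypeCongr_neg {α : Type*} {p q : α → Prop} [DecidablePred p] [DecidablePred q]
    (e : { x // p x } ≃ { x // q x }) (f : { x // ¬p x } ≃ { x // ¬q x }) (a : α) (h : ¬ p a) :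
    Equiv.subtypeCongr e f a = (f ⟨a, h⟩ : α) := by
  simp [Equiv.subtypeCongr, Equiv.sumCompl_symm_apply_of_neg h]

open Finset

lemma bbem_pos {P U S : Type*} [Fintype P] [Fintype U] [Fintype S]
    (G : P → U → ℂ) (H : U → S → ℂ) :
    0 ≤ (∑ p : P, ∑ u : U, ∑ r : U, ∑ s : S,
      (starRingEnd ℂ) (G p u) * (starRingEnd ℂ) (H r s) * (G p r * H u s)).re := by
  have key : ∀ p : P, (∑ u : U, ∑ r : U, ∑ s : S,
      (starRingEnd ℂ) (G p u) * (starRingEnd ℂ) (H r s) * (G p r * H u s))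
      = ∑ s : S, (Complex.normSq (∑ r : U, G p r * (starRingEnd ℂ) (H r s)) : ℂ) := by
    intro p
    have h1 : ∀ s : S, (Complex.normSq (∑ r : U, G p r * (starRingEnd ℂ) (H r s)) : ℂ)
        = (∑ u : U, (starRingEnd ℂ) (G p u) * H u s) *
          (∑ r : U, G p r * (starRingEnd ℂ) (H r s)) := by
      intro s
      rw [← Complex.mul_conj, mul_comm]
      congr 1
      rw [map_sum]
      refine Finset.sum_congr rfl fun u _ => ?_
      rw [map_mul, Complex.conj_conj]
    have h2 : ∀ u : U, (∑ r : U, ∑ s : S,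
        (starRingEnd ℂ) (G p u) * (starRingEnd ℂ) (H r s) * (G p r * H u s))
        = ∑ s : S, ∑ r : U,
        (starRingEnd ℂ) (G p u) * (starRingEnd ℂ) (H r s) * (G p r * H u s) := fun u =>
      Finset.sum_comm
    rw [Finset.sum_congr rfl fun u _ => h2 u, Finset.sum_comm]
    refine Finset.sum_congr rfl fun s _ => ?_
    rw [h1 s, Finset.sum_mul_sum]
    refine Finset.sum_congr rfl fun u _ => Finset.sum_congr rfl fun r _ => ?_
    ring
  rw [Finset.sum_congr rfl fun p _ => key p]
  rw [Complex.re_sum]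
  refine Finset.sum_nonneg fun p _ => ?_
  rw [Complex.re_sum]
  refine Finset.sum_nonneg fun s _ => ?_
  rw [Complex.ofReal_re]
  exact Complex.normSq_nonneg _

open Sum Finset

lemma bbem_T_nonneg {a d₁ d₂ : ℕ}
    (ψ : EuclideanSpace ℂ (Fin d₁ → Fin a)) (φ : EuclideanSpace ℂ (Fin d₂ → Fin a))
    (hψ : ∀ (π : Equiv.Perm (Fin d₁)) (v : Fin d₁ → Fin a), ψ (v ∘ π) = ψ v)
    (hφ : ∀ (π : Equiv.Perm (Fin d₂)) (v : Fin d₂ → Fin a), φ (v ∘ π) = φ v)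
    (σ : Equiv.Perm (Fin d₁ ⊕ Fin d₂)) :
    0 ≤ (∑ v : (Fin d₁ ⊕ Fin d₂) → Fin a,
      (starRingEnd ℂ) (ψ (v ∘ Sum.inl) * φ (v ∘ Sum.inr)) *
        (ψ ((v ∘ σ) ∘ Sum.inl) * φ ((v ∘ σ) ∘ Sum.inr))).re := by
  classical
  set pL : Fin d₁ → Prop := fun j => (σ (Sum.inl j)).isLeft with hpL
  set pR : Fin d₂ → Prop := fun k => (σ (Sum.inr k)).isLeft with hpR
  set qL : Fin d₁ → Prop := fun i => (σ.symm (Sum.inl i)).isLeft with hqL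
  set qR : Fin d₂ → Prop := fun k => (σ.symm (Sum.inr k)).isLeft with hqR
  let A : {j // pL j} ≃ {i // qL i} := bbemEqLL σ
  let B : {j // ¬ pL j} ≃ {k // qR k} := bbemEqLR σ
  let C : {k // pR k} ≃ {i // ¬ qL i} := bbemEqRL σ
  let D : {k // ¬ pR k} ≃ {l // ¬ qR l} := bbemEqRR σ
  have hcard : Fintype.card {i // ¬ qL i} = Fintype.card {k // qR k} := by
    have hA := Fintype.card_congr A
    have hB := Fintype.card_congr B
    rw [Fintype.card_subtype_compl, ← hA, ← Fintype.card_subtype_compl, hB]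
  let θ : {i // ¬ qL i} ≃ {k // qR k} := Fintype.equivOfCardEq hcard
  -- the two symmetrized evaluations
  set Ψ : ({i // qL i} → Fin a) → ({i // ¬ qL i} → Fin a) → ℂ :=
    fun p q => ψ (fun i => if h : qL i then p ⟨i, h⟩ else q ⟨i, h⟩) with hΨ
  set Φ : ({k // qR k} → Fin a) → ({k // ¬ qR k} → Fin a) → ℂ :=
    fun r s => φ (fun k => if h : qR k then r ⟨k, h⟩ else s ⟨k, h⟩) with hΦ
  -- key word rewrites
  have c2 : ∀ (p : {i // qL i} → Fin a) (q : {i // ¬ qL i} → Fin a)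
      (r : {k // qR k} → Fin a) (s : {k // ¬ qR k} → Fin a),
      ψ (fun j => Sum.elim
          (fun i => if h : qL i then p ⟨i, h⟩ else q ⟨i, h⟩)
          (fun k => if h : qR k then r ⟨k, h⟩ else s ⟨k, h⟩) (σ (Sum.inl j)))
        = Ψ p (fun i => r (θ i)) := by
    intro p q r s
    set π : Equiv.Perm (Fin d₁) := Equiv.subtypeCongr A (B.trans θ.symm) with hπ
    have target_eq : Ψ p (fun i => r (θ i))
        = ψ (fun i => if h : qL i then p ⟨i, h⟩ else r (θ ⟨i, h⟩)) := rfl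
    rw [target_eq]
    rw [← hψ π (fun i => if h : qL i then p ⟨i, h⟩ else r (θ ⟨i, h⟩))]
    refine congrArg ψ.ofLp ?_
    funext j
    by_cases h : pL j
    · -- σ (inl j) = inl i with qL i
      obtain ⟨i, hi⟩ := Sum.isLeft_iff.mp h
      have hqi : qL i := by rw [hqL]; simp only [← hi, Equiv.symm_apply_apply, isLeft_inl]
      have hAji : (A ⟨j, h⟩ : Fin d₁) = i := by
        show ((σ (Sum.inl j)).getLeft _ : Fin d₁) = i
        apply Sum.inl_injective (β := Fin d₂)
        rw [Sum.inl_getLeft, hi]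
      rw [hi, Sum.elim_inl, dif_pos hqi]
      rw [Function.comp_apply, bbem_subtypeCongr_pos A (B.trans θ.symm) j h, hAji, dif_pos hqi]
    · -- σ (inl j) = inr k with qR k
      obtain ⟨k, hk⟩ := Sum.isRight_iff.mp (Sum.not_isLeft.mp h)
      have hqk : qR k := by rw [hqR]; simp only [← hk, Equiv.symm_apply_apply, isLeft_inl]
      have hBjk : (B ⟨j, h⟩ : Fin d₂) = k := by
        show ((σ (Sum.inl j)).getRight _ : Fin d₂) = k
        apply Sum.inr_injective (α := Fin d₁)
        rw [Sum.inr_getRight, hk]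
      rw [hk, Sum.elim_inr, dif_pos hqk]
      rw [Function.comp_apply, bbem_subtypeCongr_neg A (B.trans θ.symm) j h]
      have hval : ((B.trans θ.symm) ⟨j, h⟩ : Fin d₁) = ((θ.symm (B ⟨j, h⟩)) : Fin d₁) := rfl
      rw [hval]
      rw [dif_neg (θ.symm (B ⟨j, h⟩)).2]
      have : (⟨((θ.symm (B ⟨j, h⟩)) : Fin d₁), (θ.symm (B ⟨j, h⟩)).2⟩ :
          {i // ¬ qL i}) = θ.symm (B ⟨j, h⟩) := Subtype.ext rfl
      rw [this, Equiv.apply_symm_apply]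
      congr 1
      exact Subtype.ext hBjk.symm
  have c3 : ∀ (p : {i // qL i} → Fin a) (q : {i // ¬ qL i} → Fin a)
      (r : {k // qR k} → Fin a) (s : {k // ¬ qR k} → Fin a),
      φ (fun k => Sum.elim
          (fun i => if h : qL i then p ⟨i, h⟩ else q ⟨i, h⟩)
          (fun k' => if h : qR k' then r ⟨k', h⟩ else s ⟨k', h⟩) (σ (Sum.inr k)))
        = Φ (fun k => q (θ.symm k)) s := by
    intro p q r s
    set π : Equiv.Perm (Fin d₂) := Equiv.subtypeCongr (C.trans θ) D with hπ
    have target_eq : Φ (fun k => q (θ.symm k)) s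
        = φ (fun k => if h : qR k then q (θ.symm ⟨k, h⟩) else s ⟨k, h⟩) := rfl
    rw [target_eq]
    rw [← hφ π (fun k => if h : qR k then q (θ.symm ⟨k, h⟩) else s ⟨k, h⟩)]
    refine congrArg φ.ofLp ?_
    funext k
    by_cases h : pR k
    · obtain ⟨i, hi⟩ := Sum.isLeft_iff.mp h
      have hqi : ¬ qL i := by
        rw [hqL]; simp only [← hi, Equiv.symm_apply_apply, isLeft_inr]; exact fun hh => by simp at hh
      have hCki : (C ⟨k, h⟩ : Fin d₁) = i := by
        show ((σ (Sum.inr k)).getLeft _ : Fin d₁) = i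
        apply Sum.inl_injective (β := Fin d₂)
        rw [Sum.inl_getLeft, hi]
      rw [hi, Sum.elim_inl, dif_neg hqi]
      rw [Function.comp_apply, bbem_subtypeCongr_pos (C.trans θ) D k h]
      have hval : ((C.trans θ) ⟨k, h⟩ : Fin d₂) = ((θ (C ⟨k, h⟩)) : Fin d₂) := rfl
      rw [hval, dif_pos (θ (C ⟨k, h⟩)).2]
      have : (⟨((θ (C ⟨k, h⟩)) : Fin d₂), (θ (C ⟨k, h⟩)).2⟩ : {k' // qR k'})
          = θ (C ⟨k, h⟩) := Subtype.ext rfl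
      rw [this, Equiv.symm_apply_apply]
      congr 1
      exact Subtype.ext hCki.symm
    · obtain ⟨l, hl⟩ := Sum.isRight_iff.mp (Sum.not_isLeft.mp h)
      have hql : ¬ qR l := by
        rw [hqR]; simp only [← hl, Equiv.symm_apply_apply, isLeft_inr]; exact fun hh => by simp at hh
      have hDkl : (D ⟨k, h⟩ : Fin d₂) = l := by
        show ((σ (Sum.inr k)).getRight _ : Fin d₂) = l
        apply Sum.inr_injective (α := Fin d₁)
        rw [Sum.inr_getRight, hl]
      rw [hl, Sum.elim_inr, dif_neg hql]
      rw [Function.comp_apply, bbem_subtypeCongr_neg (C.trans θ) D k h]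
      rw [dif_neg (D ⟨k, h⟩).2]
      congr 1
      exact Subtype.ext hDkl.symm
  -- now the sum manipulations
  set G : ({i // qL i} → Fin a) → ({k // qR k} → Fin a) → ℂ :=
    fun p u => Ψ p (fun i => u (θ i)) with hG
  have main : (∑ v : (Fin d₁ ⊕ Fin d₂) → Fin a,
      (starRingEnd ℂ) (ψ (v ∘ Sum.inl) * φ (v ∘ Sum.inr)) *
        (ψ ((v ∘ σ) ∘ Sum.inl) * φ ((v ∘ σ) ∘ Sum.inr)))
      = ∑ p : {i // qL i} → Fin a, ∑ u : {k // qR k} → Fin a,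
        ∑ r : {k // qR k} → Fin a, ∑ s : {k // ¬ qR k} → Fin a,
        (starRingEnd ℂ) (G p u) * (starRingEnd ℂ) (Φ r s) *
          (G p r * Φ u s) := by
    rw [bbem_sum_sumArrow, bbem_sum_split qL]
    refine Finset.sum_congr rfl fun p _ => ?_
    rw [bbem_sum_precomp θ]
    refine Finset.sum_congr rfl fun u _ => ?_
    rw [bbem_sum_split qR]
    refine Finset.sum_congr rfl fun r _ => Finset.sum_congr rfl fun s _ => ?_
    have hc2 := c2 p (fun i' => u (θ i')) r s
    have hc3 := c3 p (fun i' => u (θ i')) r s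
    simp only [Function.comp_def, Sum.elim_inl, Sum.elim_inr, Equiv.apply_symm_apply] at hc2 hc3 ⊢
    rw [hc2, hc3, map_mul]
  rw [main]
  exact bbem_pos G Φ


/-- Beauzamy–Bombieri–Enflo–Montgomery. For symmetric tensors
`ψ ∈ S^{d₁}(ℂ^a)` and `φ ∈ S^{d₂}(ℂ^a)`, the projection of `ψ ⊗ φ` onto the symmetric
subspace `S^{d₁+d₂}(ℂ^a)` has norm at least `C(d₁+d₂,d₁)^{-1/2} ‖ψ‖ ‖φ‖`. Here
`(ℂ^a)^{⊗(d₁+d₂)}` is indexed by `Fin d₁ ⊕ Fin d₂`. -/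
theorem stmt2 (a d₁ d₂ : ℕ) (ha : 0 < a) (hd₁ : 0 < d₁) (hd₂ : 0 < d₂)
    (ψ : EuclideanSpace ℂ (Fin d₁ → Fin a)) (φ : EuclideanSpace ℂ (Fin d₂ → Fin a))
    (hψ : ψ ∈ symmSub a (Fin d₁)) (hφ : φ ∈ symmSub a (Fin d₂)) :
    (Real.sqrt ((d₁ + d₂).choose d₁))⁻¹ * ‖ψ‖ * ‖φ‖ ≤
      ‖Submodule.orthogonalProjection (symmSub a (Fin d₁ ⊕ Fin d₂))
        (WithLp.toLp 2 (fun v => ψ (v ∘ Sum.inl) * φ (v ∘ Sum.inr)) :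
          EuclideanSpace ℂ ((Fin d₁ ⊕ Fin d₂) → Fin a))‖ := by
  classical
  have hψ' : ∀ (π : Equiv.Perm (Fin d₁)) (v : Fin d₁ → Fin a), ψ (v ∘ π) = ψ v := hψ
  have hφ' : ∀ (π : Equiv.Perm (Fin d₂)) (v : Fin d₂ → Fin a), φ (v ∘ π) = φ v := hφ
  set K := symmSub a (Fin d₁ ⊕ Fin d₂) with hK
  set x : EuclideanSpace ℂ ((Fin d₁ ⊕ Fin d₂) → Fin a) :=
    WithLp.toLp 2 (fun v => ψ (v ∘ Sum.inl) * φ (v ∘ Sum.inr)) with hx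
  set N : ℕ := (d₁ + d₂).factorial with hN
  have hcardPerm : Fintype.card (Equiv.Perm (Fin d₁ ⊕ Fin d₂)) = N := by
    rw [Fintype.card_perm]; simp [hN]
  set y : EuclideanSpace ℂ ((Fin d₁ ⊕ Fin d₂) → Fin a) :=
    WithLp.toLp 2 (fun v => (N : ℂ)⁻¹ * ∑ τ : Equiv.Perm (Fin d₁ ⊕ Fin d₂), x (v ∘ τ)) with hy
  -- invariance of x under block permutations
  have hxblock : ∀ (τ₁ : Equiv.Perm (Fin d₁)) (τ₂ : Equiv.Perm (Fin d₂))
      (v : (Fin d₁ ⊕ Fin d₂) → Fin a), x (v ∘ (Equiv.sumCongr τ₁ τ₂)) = x v := by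
    intro τ₁ τ₂ v
    show ψ ((v ∘ (Equiv.sumCongr τ₁ τ₂)) ∘ Sum.inl) * φ ((v ∘ (Equiv.sumCongr τ₁ τ₂)) ∘ Sum.inr)
      = ψ (v ∘ Sum.inl) * φ (v ∘ Sum.inr)
    have e1 : (v ∘ (Equiv.sumCongr τ₁ τ₂)) ∘ Sum.inl = (v ∘ Sum.inl) ∘ τ₁ := by
      funext j; simp
    have e2 : (v ∘ (Equiv.sumCongr τ₁ τ₂)) ∘ Sum.inr = (v ∘ Sum.inr) ∘ τ₂ := by
      funext k; simp
    rw [e1, e2, hψ' τ₁, hφ' τ₂]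
  -- y is in the symmetric subspace
  have hymem : y ∈ K := by
    have : ∀ (τ : Equiv.Perm (Fin d₁ ⊕ Fin d₂)) (v : (Fin d₁ ⊕ Fin d₂) → Fin a),
        y (v ∘ τ) = y v := by
      intro τ v
      show (N : ℂ)⁻¹ * ∑ ρ : Equiv.Perm (Fin d₁ ⊕ Fin d₂), x ((v ∘ τ) ∘ ρ)
          = (N : ℂ)⁻¹ * ∑ ρ : Equiv.Perm (Fin d₁ ⊕ Fin d₂), x (v ∘ ρ)
      congr 1
      have hcomp : ∀ ρ : Equiv.Perm (Fin d₁ ⊕ Fin d₂), (v ∘ τ) ∘ ρ = v ∘ ⇑(τ * ρ) := by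
        intro ρ; funext i; rfl
      calc ∑ ρ : Equiv.Perm (Fin d₁ ⊕ Fin d₂), x ((v ∘ τ) ∘ ρ)
          = ∑ ρ : Equiv.Perm (Fin d₁ ⊕ Fin d₂), x (v ∘ ((Equiv.mulLeft τ) ρ)) := by
            refine Finset.sum_congr rfl fun ρ _ => ?_
            rw [hcomp ρ]; rfl
        _ = ∑ ρ : Equiv.Perm (Fin d₁ ⊕ Fin d₂), x (v ∘ ρ) :=
            Equiv.sum_comp (Equiv.mulLeft τ) (fun ρ : Equiv.Perm (Fin d₁ ⊕ Fin d₂) => x (v ∘ ρ))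
    exact this
  -- the orthogonal projection of x is y
  have hproj : (Submodule.orthogonalProjection K x : EuclideanSpace ℂ ((Fin d₁ ⊕ Fin d₂) → Fin a)) = y := by
    apply Submodule.eq_starProjection_of_mem_of_inner_eq_zero hymem
    intro w hw
    have hw' : ∀ (τ : Equiv.Perm (Fin d₁ ⊕ Fin d₂)) (v : (Fin d₁ ⊕ Fin d₂) → Fin a),
        w (v ∘ τ) = w v := hw
    rw [inner_sub_left, sub_eq_zero]
    rw [PiLp.inner_apply, PiLp.inner_apply]
    simp only [RCLike.inner_apply']
    have hxy : ∀ v, (starRingEnd ℂ) (y v) * w v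
        = (N : ℂ)⁻¹ * ∑ τ : Equiv.Perm (Fin d₁ ⊕ Fin d₂), (starRingEnd ℂ) (x (v ∘ τ)) * w v := by
      intro v
      show (starRingEnd ℂ) ((N : ℂ)⁻¹ * ∑ τ : Equiv.Perm (Fin d₁ ⊕ Fin d₂), x (v ∘ τ)) * w v = _
      rw [map_mul, map_sum, map_inv₀, map_natCast, mul_assoc, Finset.sum_mul]
    rw [Finset.sum_congr rfl fun v _ => hxy v, ← Finset.mul_sum, Finset.sum_comm]
    have hfix : ∀ τ : Equiv.Perm (Fin d₁ ⊕ Fin d₂),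
        (∑ v : (Fin d₁ ⊕ Fin d₂) → Fin a, (starRingEnd ℂ) (x (v ∘ τ)) * w v)
        = ∑ v : (Fin d₁ ⊕ Fin d₂) → Fin a, (starRingEnd ℂ) (x v) * w v := by
      intro τ
      rw [bbem_sum_precomp τ (f := fun v => (starRingEnd ℂ) (x v) * w v)]
      refine Finset.sum_congr rfl fun v _ => ?_
      rw [hw' τ v]
    rw [Finset.sum_congr rfl fun τ _ => hfix τ, Finset.sum_const, Finset.card_univ, hcardPerm]
    rw [nsmul_eq_mul, ← mul_assoc, inv_mul_cancel₀, one_mul]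
    · exact_mod_cast Nat.cast_ne_zero.mpr (Nat.factorial_ne_zero _)
  -- inner product formula
  set T : Equiv.Perm (Fin d₁ ⊕ Fin d₂) → ℂ :=
    fun τ => ∑ v : (Fin d₁ ⊕ Fin d₂) → Fin a, (starRingEnd ℂ) (x v) * x (v ∘ τ) with hT
  have hinner : (inner ℂ x y : ℂ) = (N : ℂ)⁻¹ * ∑ τ : Equiv.Perm (Fin d₁ ⊕ Fin d₂), T τ := by
    rw [PiLp.inner_apply]
    simp only [RCLike.inner_apply']
    have h1 : ∀ v, (starRingEnd ℂ) (x v) * y v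
        = (N : ℂ)⁻¹ * ∑ τ : Equiv.Perm (Fin d₁ ⊕ Fin d₂),
            (starRingEnd ℂ) (x v) * x (v ∘ τ) := by
      intro v
      show (starRingEnd ℂ) (x v) *
          ((N : ℂ)⁻¹ * ∑ τ : Equiv.Perm (Fin d₁ ⊕ Fin d₂), x (v ∘ τ)) = _
      rw [mul_left_comm, Finset.mul_sum]
    rw [Finset.sum_congr rfl fun v _ => h1 v, ← Finset.mul_sum, Finset.sum_comm]
  have hTnn : ∀ τ : Equiv.Perm (Fin d₁ ⊕ Fin d₂), 0 ≤ (T τ).re := fun τ =>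
    bbem_T_nonneg ψ φ hψ' hφ' τ
  have hTdiag : ∀ (τ₁ : Equiv.Perm (Fin d₁)) (τ₂ : Equiv.Perm (Fin d₂)),
      (T (Equiv.sumCongr τ₁ τ₂)).re = ‖ψ‖ ^ 2 * ‖φ‖ ^ 2 := by
    intro τ₁ τ₂
    have h1 : T (Equiv.sumCongr τ₁ τ₂)
        = ∑ v : (Fin d₁ ⊕ Fin d₂) → Fin a, (Complex.normSq (x v) : ℂ) := by
      show (∑ v : (Fin d₁ ⊕ Fin d₂) → Fin a,
        (starRingEnd ℂ) (x v) * x (v ∘ (Equiv.sumCongr τ₁ τ₂))) = _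
      refine Finset.sum_congr rfl fun v _ => ?_
      rw [hxblock τ₁ τ₂ v, ← Complex.normSq_eq_conj_mul_self]
    rw [h1, Complex.re_sum]
    simp only [Complex.ofReal_re]
    have h2 : ∀ (vL : Fin d₁ → Fin a) (vR : Fin d₂ → Fin a),
        Complex.normSq (x (Sum.elim vL vR)) = Complex.normSq (ψ vL) * Complex.normSq (φ vR) := by
      intro vL vR
      show Complex.normSq (ψ (Sum.elim vL vR ∘ Sum.inl) * φ (Sum.elim vL vR ∘ Sum.inr)) = _
      rw [Complex.normSq_mul]
      rfl
    have hψn : ∑ vL : Fin d₁ → Fin a, Complex.normSq (ψ vL) = ‖ψ‖ ^ 2 := by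
      have e : ∀ vL, Complex.normSq (ψ vL) = ‖ψ vL‖ ^ 2 := fun vL => by
        rw [← Complex.sq_norm]
      rw [Finset.sum_congr rfl fun vL _ => e vL, EuclideanSpace.norm_eq,
        Real.sq_sqrt (Finset.sum_nonneg fun vL _ => sq_nonneg _)]
    have hφn : ∑ vR : Fin d₂ → Fin a, Complex.normSq (φ vR) = ‖φ‖ ^ 2 := by
      have e : ∀ vR, Complex.normSq (φ vR) = ‖φ vR‖ ^ 2 := fun vR => by
        rw [← Complex.sq_norm]
      rw [Finset.sum_congr rfl fun vR _ => e vR, EuclideanSpace.norm_eq,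
        Real.sq_sqrt (Finset.sum_nonneg fun vR _ => sq_nonneg _)]
    rw [bbem_sum_sumArrow (f := fun v => Complex.normSq (x v))]
    rw [Finset.sum_congr rfl fun vL _ => Finset.sum_congr rfl fun vR _ => h2 vL vR]
    rw [← Finset.sum_mul_sum, hψn, hφn]
  -- norm squared of the projection
  set p : EuclideanSpace ℂ ((Fin d₁ ⊕ Fin d₂) → Fin a) :=
    (Submodule.orthogonalProjection K x : EuclideanSpace ℂ ((Fin d₁ ⊕ Fin d₂) → Fin a)) with hpdef
  have hnormsq : ‖p‖ ^ 2
      = (N : ℝ)⁻¹ * ∑ τ : Equiv.Perm (Fin d₁ ⊕ Fin d₂), (T τ).re := by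
    have hpK : p ∈ K := (Submodule.orthogonalProjection K x).2
    have horth : (inner ℂ (x - p) p : ℂ) = 0 := by
      have hmem := Submodule.sub_starProjection_mem_orthogonal (K := K) x
      exact (Submodule.mem_orthogonal' K (x - p)).mp hmem p hpK
    have hxp : (inner ℂ x p : ℂ) = (‖p‖ : ℂ) ^ 2 := by
      have h3 : (inner ℂ x p : ℂ) - inner ℂ p p = inner ℂ (x - p) p := (inner_sub_left _ _ _).symm
      rw [horth, sub_eq_zero] at h3
      rw [h3, inner_self_eq_norm_sq_to_K]
      norm_cast
    have h4 : ((‖p‖ : ℂ) ^ 2).re = ‖p‖ ^ 2 := by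
      rw [← Complex.ofReal_pow, Complex.ofReal_re]
    rw [← h4, ← hxp, hproj, hinner]
    rw [show ((N : ℂ))⁻¹ = Complex.ofReal ((N : ℝ)⁻¹) by push_cast; ring]
    rw [Complex.re_ofReal_mul, Complex.re_sum]
  -- counting bound
  have hbound : ((d₁.factorial * d₂.factorial : ℕ) : ℝ) * (‖ψ‖ ^ 2 * ‖φ‖ ^ 2)
      ≤ ∑ τ : Equiv.Perm (Fin d₁ ⊕ Fin d₂), (T τ).re := by
    have himage : ∑ τ ∈ Finset.image (fun ττ : Equiv.Perm (Fin d₁) × Equiv.Perm (Fin d₂) =>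
        Equiv.sumCongr ττ.1 ττ.2) Finset.univ, (T τ).re
        = ((d₁.factorial * d₂.factorial : ℕ) : ℝ) * (‖ψ‖ ^ 2 * ‖φ‖ ^ 2) := by
      rw [Finset.sum_image
        (g := fun ττ : Equiv.Perm (Fin d₁) × Equiv.Perm (Fin d₂) => Equiv.sumCongr ττ.1 ττ.2)
        (fun x1 _ x2 _ h => Equiv.Perm.sumCongrHom_injective h)]
      rw [Finset.sum_congr rfl fun ττ _ => hTdiag ττ.1 ττ.2]
      rw [Finset.sum_const, Finset.card_univ, Fintype.card_prod, Fintype.card_perm,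
        Fintype.card_perm, Fintype.card_fin, Fintype.card_fin, nsmul_eq_mul]
    rw [← himage]
    exact Finset.sum_le_sum_of_subset_of_nonneg (Finset.subset_univ _) (fun τ _ _ => hTnn τ)
  -- numeric endgame
  set c : ℝ := ((d₁ + d₂).choose d₁ : ℝ) with hc
  have hc_pos : 0 < c := by
    rw [hc]; exact_mod_cast Nat.choose_pos (Nat.le_add_right d₁ d₂)
  have hF_pos : 0 < ((d₁.factorial * d₂.factorial : ℕ) : ℝ) := by
    positivity
  have hN_pos : 0 < (N : ℝ) := by
    rw [hN]; exact_mod_cast Nat.factorial_pos _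
  have hfact : c * ((d₁.factorial * d₂.factorial : ℕ) : ℝ) = (N : ℝ) := by
    have hnat : (d₁ + d₂).choose d₁ * (d₁.factorial * d₂.factorial) = (d₁ + d₂).factorial := by
      have h5 := Nat.choose_mul_factorial_mul_factorial (Nat.le_add_right d₁ d₂)
      simp only [Nat.add_sub_cancel_left] at h5
      rw [← h5]; ring
    rw [hc, hN]
    exact_mod_cast hnat
  have final_sq : ((Real.sqrt c)⁻¹ * ‖ψ‖ * ‖φ‖) ^ 2 ≤ ‖p‖ ^ 2 := by
    have hL : ((Real.sqrt c)⁻¹ * ‖ψ‖ * ‖φ‖) ^ 2 = c⁻¹ * (‖ψ‖ ^ 2 * ‖φ‖ ^ 2) := by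
      rw [mul_pow, mul_pow, inv_pow, Real.sq_sqrt hc_pos.le, mul_assoc]
    have hmid : c⁻¹ * (‖ψ‖ ^ 2 * ‖φ‖ ^ 2)
        = (N : ℝ)⁻¹ * (((d₁.factorial * d₂.factorial : ℕ) : ℝ) * (‖ψ‖ ^ 2 * ‖φ‖ ^ 2)) := by
      rw [← hfact]
      field_simp
    rw [hL, hmid, hnormsq]
    exact mul_le_mul_of_nonneg_left hbound (inv_nonneg.mpr hN_pos.le)
  have hB_nonneg : 0 ≤ (Real.sqrt c)⁻¹ * ‖ψ‖ * ‖φ‖ := by positivity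
  show (Real.sqrt c)⁻¹ * ‖ψ‖ * ‖φ‖ ≤ ‖p‖
  calc (Real.sqrt c)⁻¹ * ‖ψ‖ * ‖φ‖
      = Real.sqrt (((Real.sqrt c)⁻¹ * ‖ψ‖ * ‖φ‖) ^ 2) := (Real.sqrt_sq hB_nonneg).symm
    _ ≤ Real.sqrt (‖p‖ ^ 2) := Real.sqrt_le_sqrt final_sq
    _ = ‖p‖ := Real.sqrt_sq (norm_nonneg _)
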